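/- Let R be a finite-dimensional semisimple algebra over an algebraically closed field F, so R ≅ ⊕_i End(V_i). Then the minimal CH-norm of R is the determinant of the minimal faithful representation ⊕_i V_i, i.e., N(r) = ∏_i det(r|_{V_i}). -/

import Mathlib

open TensorProduct

variable {F R ι : Type*}

/-- The polynomial function on `R` attached to a polynomial in the coordinates
along the basis `b`. -/
noncomputable def polyFun [Field F] [Ring R] [Algebra F R] [Fintype ι]
    (b : Module.Basis ι F R) (p : MvPolynomial ι F) : R → F :=
  fun r => MvPolynomial.eval (fun i => b.repr r i) p

/-- The abstract characteristic polynomial `χ_a(t) = N(t·1 - a)` of an element `a`,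
for the polynomial map attached to `p`. -/
noncomputable def charPolyOf [Field F] [Ring R] [Algebra F R] [Fintype ι]
    (b : Module.Basis ι F R) (p : MvPolynomial ι F) (a : R) : Polynomial F :=
  MvPolynomial.aeval
    (fun i => Polynomial.C (b.repr 1 i) * Polynomial.X - Polynomial.C (b.repr a i)) p

/-- `p` defines a Cayley–Hamilton norm of degree `n` on `R` (w.r.t. the basis `b`):
homogeneous of degree `n`, multiplicative, and every element satisfies its abstract
characteristic polynomial. -/
structure IsCHNorm [Field F] [Ring R] [Algebra F R] [Fintype ι]
    (b : Module.Basis ι F R) (n : ℕ) (p : MvPolynomial ι F) : Prop where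
  homog : ∀ (α : F) (r : R), polyFun b p (α • r) = α ^ n * polyFun b p r
  mult : ∀ x y : R, polyFun b p (x * y) = polyFun b p x * polyFun b p y
  ch : ∀ a : R, Polynomial.aeval a (charPolyOf b p a) = 0

/-- The generic element `x = Σ xᵢ aᵢ` of `R ⊗ K`, `K` the rational function field. -/
noncomputable def genElt [Field F] [Ring R] [Algebra F R] [Fintype ι] (b : Module.Basis ι F R) :
    FractionRing (MvPolynomial ι F) ⊗[F] R :=
  ∑ i, algebraMap (MvPolynomial ι F) (FractionRing (MvPolynomial ι F)) (MvPolynomial.X i)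
    ⊗ₜ[F] b i


namespace Stmt17Aux

open MvPolynomial

variable {F : Type*} [Field F]

lemma eval_aeval_mv {σ τ : Type*} (g : τ → MvPolynomial σ F) (q : MvPolynomial τ F) (x : σ → F) :
    eval x (aeval g q) = eval (fun t => eval x (g t)) q := by
  induction q using MvPolynomial.induction_on with
  | C a => simp
  | add p q hp hq => simp only [map_add, hp, hq]
  | mul_X p i hp => simp only [map_mul, aeval_X, eval_X, hp]

lemma peval_aeval {τ : Type*} (g : τ → Polynomial F) (q : MvPolynomial τ F) (t : F) :
    Polynomial.eval t (aeval g q) = eval (fun s => (g s).eval t) q := by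
  induction q using MvPolynomial.induction_on with
  | C a => simp
  | add p q hp hq => simp only [map_add, Polynomial.eval_add, hp, hq]
  | mul_X p i hp => simp only [map_mul, aeval_X, Polynomial.eval_mul, eval_X, hp]

lemma coeff_comp_C_mul_X (q : Polynomial F) (s : F) (j : ℕ) :
    (q.comp (Polynomial.C s * Polynomial.X)).coeff j = q.coeff j * s ^ j := by
  induction q using Polynomial.induction_on' with
  | add p q hp hq => simp [Polynomial.add_comp, hp, hq, add_mul]
  | monomial m a =>
    simp only [Polynomial.monomial_comp, mul_pow, ← Polynomial.C_pow, ← mul_assoc, ← map_mul,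
      Polynomial.coeff_C_mul, Polynomial.coeff_X_pow, Polynomial.coeff_monomial]
    by_cases h : j = m
    · simp [h, mul_comm]
    · rw [if_neg (by omega), if_neg (by omega)]
      simp

lemma one_var_mult [Infinite F] {q : Polynomial F} (hq : q ≠ 0)
    (hm : ∀ s t : F, q.eval (s * t) = q.eval s * q.eval t) :
    ∀ t, q.eval t = t ^ q.natDegree := by
  intro t
  have key : ∀ s : F, q.comp (Polynomial.C s * Polynomial.X) = Polynomial.C (q.eval s) * q := by
    intro s
    apply Polynomial.funext
    intro r
    simp [Polynomial.eval_comp, hm]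
  have h2 : ∀ s : F, q.coeff q.natDegree * s ^ q.natDegree = q.eval s * q.coeff q.natDegree := by
    intro s
    have := congrArg (fun p => Polynomial.coeff p q.natDegree) (key s)
    simpa [coeff_comp_C_mul_X] using this
  have hc : q.coeff q.natDegree ≠ 0 := Polynomial.leadingCoeff_ne_zero.mpr hq
  have h3 : q.eval t * q.coeff q.natDegree = t ^ q.natDegree * q.coeff q.natDegree := by
    rw [← h2 t]; ring
  exact mul_right_cancel₀ hc h3

open MvPolynomial Matrix

variable {n : Type*} [Fintype n] [DecidableEq n]

lemma update_one_mul_update_one (i : n) (x y : F) :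
    (fun k => Function.update (1 : n → F) i x k * Function.update (1 : n → F) i y k)
      = Function.update (1 : n → F) i (x * y) := by
  funext k
  rcases eq_or_ne k i with rfl | hk
  · simp
  · simp [Function.update_of_ne hk]

lemma diag_one' : diagonal (1 : n → F) = (1 : Matrix n n F) := by
  ext a b
  by_cases h : a = b <;> simp [h, Matrix.one_apply]

lemma diagonal_mul_stdBasisMatrix (d : n → F) (i j : n) (c : F) :
    diagonal d * Matrix.single i j c = Matrix.single i j (d i * c) := by
  ext a b
  rw [diagonal_mul]
  simp only [Matrix.single, of_apply]
  split_ifs with h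
  · rw [h.1]
  · rw [mul_zero]

lemma stdBasisMatrix_mul_diagonal' (d : n → F) (i j : n) (c : F) :
    Matrix.single i j c * diagonal d = Matrix.single i j (c * d j) := by
  ext a b
  rw [mul_diagonal]
  simp only [Matrix.single, of_apply]
  split_ifs with h
  · rw [h.2]
  · rw [zero_mul]

lemma update_mul_update_eq_one (i : n) {μ : F} (hμ : μ ≠ 0) :
    diagonal (Function.update (1 : n → F) i μ) *
      diagonal (Function.update (1 : n → F) i μ⁻¹) = 1 := by
  rw [diagonal_mul_diagonal]
  rw [show (fun k => Function.update (1 : n → F) i μ k *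
    Function.update (1 : n → F) i μ⁻¹ k) = Function.update (1 : n → F) i (μ * μ⁻¹) from
    update_one_mul_update_one i μ μ⁻¹, mul_inv_cancel₀ hμ, Function.update_one, diag_one']

lemma diag_conj_transvection {i j : n} (hij : i ≠ j) {μ : F} (hμ : μ ≠ 0) (c : F) :
    diagonal (Function.update (1 : n → F) i μ) * transvection i j c *
      diagonal (Function.update (1 : n → F) i μ⁻¹) = transvection i j (μ * c) := by
  rw [transvection, Matrix.mul_add, Matrix.mul_one, Matrix.add_mul,
    update_mul_update_eq_one i hμ, diagonal_mul_stdBasisMatrix, stdBasisMatrix_mul_diagonal',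
    Function.update_self, Function.update_of_ne (Ne.symm hij), Pi.one_apply, mul_one, transvection]

/-- `f` is a polynomial function of the entries. -/
def IsPolyM (f : Matrix n n F → F) : Prop :=
  ∃ q : MvPolynomial (n × n) F, ∀ A, f A = eval (fun s => A s.1 s.2) q

lemma IsPolyM.line {f : Matrix n n F → F} (hf : IsPolyM f) (A B : Matrix n n F) :
    ∃ q : Polynomial F, ∀ t, f (A + t • B) = q.eval t := by
  obtain ⟨p, hp⟩ := hf
  refine ⟨aeval (fun s => Polynomial.C (A s.1 s.2) + Polynomial.C (B s.1 s.2) * Polynomial.X) p,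
    fun t => ?_⟩
  have hg : (fun s : n × n => Polynomial.eval t
      (Polynomial.C (A s.1 s.2) + Polynomial.C (B s.1 s.2) * Polynomial.X)) =
      fun s : n × n => (A + t • B) s.1 s.2 := by
    funext s
    simp only [Polynomial.eval_add, Polynomial.eval_mul, Polynomial.eval_C, Polynomial.eval_X,
      Matrix.add_apply, Matrix.smul_apply, smul_eq_mul]
    ring
  rw [hp, peval_aeval, hg]

section mult

variable {f : Matrix n n F → F} (hmul : ∀ A B, f (A * B) = f A * f B) (h1 : f 1 = 1)

include hmul h1

lemma transvection_eq_one [Infinite F] (hf : IsPolyM f) {i j : n} (hij : i ≠ j) (c : F) :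
    f (transvection i j c) = 1 := by
  have hscale : ∀ μ : F, μ ≠ 0 → ∀ c : F,
      f (transvection i j (μ * c)) = f (transvection i j c) := by
    intro μ hμ c
    have hDD' := update_mul_update_eq_one (F := F) (n := n) i hμ
    have h2 : f (diagonal (Function.update (1 : n → F) i μ)) *
        f (diagonal (Function.update (1 : n → F) i μ⁻¹)) = 1 := by
      rw [← hmul, hDD', h1]
    calc f (transvection i j (μ * c))
        = f (diagonal (Function.update (1 : n → F) i μ) * transvection i j c *
            diagonal (Function.update (1 : n → F) i μ⁻¹)) := by
          rw [diag_conj_transvection hij hμ c]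
      _ = f (diagonal (Function.update (1 : n → F) i μ)) * f (transvection i j c) *
            f (diagonal (Function.update (1 : n → F) i μ⁻¹)) := by rw [hmul, hmul]
      _ = f (transvection i j c) := by rw [mul_right_comm, h2, one_mul]
  obtain ⟨q, hq⟩ := hf.line 1 (Matrix.single i j 1)
  have hqT : ∀ t : F, f (transvection i j t) = q.eval t := by
    intro t
    rw [← hq t]
    congr 1
    rw [transvection, Matrix.smul_single, smul_eq_mul, mul_one]
  have hconst : ∀ μ : F, μ ≠ 0 → q.eval μ = q.eval 1 := by
    intro μ hμ
    rw [← hqT, ← hqT, ← mul_one μ]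
    exact hscale μ hμ 1
  have hq0 : q - Polynomial.C (q.eval 1) = 0 := by
    apply Polynomial.eq_zero_of_infinite_isRoot
    apply Set.Infinite.mono (s := {x : F | x ≠ 0})
    · intro x hx
      simp only [Set.mem_setOf_eq, Polynomial.IsRoot, Polynomial.eval_sub, Polynomial.eval_C,
        sub_eq_zero]
      exact hconst x hx
    · exact (Set.finite_singleton (0 : F)).infinite_compl
  have hcc : ∀ t : F, q.eval t = q.eval 1 := by
    intro t
    have := congrArg (Polynomial.eval t) hq0
    simpa [sub_eq_zero] using this
  have h0 : q.eval 0 = 1 := by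
    rw [← hqT 0, transvection_zero, h1]
  rw [hqT c, hcc c, ← hcc 0, h0]

lemma f_submatrix (A : Matrix n n F) (e : n ≃ n) : f (A.submatrix e e) = f A := by
  have hP : (1 : Matrix n n F).submatrix e (Equiv.refl n) * A = A.submatrix e id := by
    rw [one_submatrix_mul]
    rfl
  have hQ : A.submatrix e id * (1 : Matrix n n F).submatrix (Equiv.refl n) e =
      A.submatrix e e := by
    rw [mul_submatrix_one]
    rfl
  have hPQ : (1 : Matrix n n F).submatrix e (Equiv.refl n) *
      (1 : Matrix n n F).submatrix (Equiv.refl n) e = 1 := by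
    rw [mul_submatrix_one, submatrix_submatrix]
    simpa using submatrix_one_equiv (α := F) e
  have h2 : f ((1 : Matrix n n F).submatrix e (Equiv.refl n)) *
      f ((1 : Matrix n n F).submatrix (Equiv.refl n) e) = 1 := by rw [← hmul, hPQ, h1]
  calc f (A.submatrix e e) = f ((1 : Matrix n n F).submatrix e (Equiv.refl n) * A *
        (1 : Matrix n n F).submatrix (Equiv.refl n) e) := by rw [hP, hQ]
    _ = f ((1 : Matrix n n F).submatrix e (Equiv.refl n)) * f A *
        f ((1 : Matrix n n F).submatrix (Equiv.refl n) e) := by rw [hmul, hmul]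
    _ = f A := by rw [mul_right_comm, h2, one_mul]

omit hmul in
lemma f_diagonal_one : f (diagonal (1 : n → F)) = 1 := by
  rw [diag_one', h1]

lemma f_diagonal_prod (s : Finset n) (u : n → n → F) :
    f (diagonal (∏ j ∈ s, u j)) = ∏ j ∈ s, f (diagonal (u j)) := by
  classical
  induction s using Finset.induction_on with
  | empty => simpa using f_diagonal_one h1
  | insert a s ha ih =>
    rw [Finset.prod_insert ha, Finset.prod_insert ha, ← ih]
    rw [show diagonal (u _ * ∏ j ∈ _, u j) = diagonal (u _) * diagonal (∏ j ∈ _, u j) from by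
      rw [diagonal_mul_diagonal]; rfl, hmul]

lemma diag_classify [Infinite F] (hf : IsPolyM f) :
    ∃ m : n → ℕ, ∀ d : n → F, f (diagonal d) = ∏ j, d j ^ m j := by
  have key : ∀ j : n, ∃ mj : ℕ, ∀ t : F,
      f (diagonal (Function.update (1 : n → F) j t)) = t ^ mj := by
    intro j
    obtain ⟨q, hq⟩ := hf.line (diagonal (Function.update (1 : n → F) j 0))
      (diagonal (Pi.single j 1))
    have hqe : ∀ t : F, f (diagonal (Function.update (1 : n → F) j t)) = q.eval t := by
      intro t
      have hmat : diagonal (Function.update (1 : n → F) j t) =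
          diagonal (Function.update (1 : n → F) j 0) + t • diagonal (Pi.single j 1) := by
        ext a b
        rcases eq_or_ne a b with rfl | hab
        · rcases eq_or_ne a j with rfl | haj
          · simp
          · simp [Function.update_of_ne haj, Pi.single_eq_of_ne haj]
        · simp [diagonal_apply_ne _ hab]
      rw [hmat]
      exact hq t
    have hq1 : q.eval 1 = 1 := by
      rw [← hqe, Function.update_one]
      exact f_diagonal_one h1
    have hqm : ∀ s t : F, q.eval (s * t) = q.eval s * q.eval t := by
      intro s t
      rw [← hqe, ← hqe, ← hqe, ← hmul, diagonal_mul_diagonal,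
        show (fun k => Function.update (1 : n → F) j s k * Function.update (1 : n → F) j t k) =
          Function.update (1 : n → F) j (s * t) from update_one_mul_update_one j s t]
    have hq0 : q ≠ 0 := fun h => by simp [h] at hq1
    exact ⟨q.natDegree, fun t => by rw [hqe, one_var_mult hq0 hqm]⟩
  choose m hm using key
  refine ⟨m, fun d => ?_⟩
  have hd : d = ∏ j, Function.update (1 : n → F) j (d j) := by
    funext k
    rw [Finset.prod_apply]
    refine ((Finset.prod_eq_single k (fun j _ hj => by
        rw [Function.update_of_ne (Ne.symm hj)]; rfl) (by simp)).trans (by simp)).symm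
  have hprod := f_diagonal_prod hmul h1 Finset.univ
    (fun j => Function.update (1 : n → F) j (d j))
  rw [← hd] at hprod
  rw [hprod]
  exact Finset.prod_congr rfl fun j _ => hm j (d j)

lemma matrix_classify [Infinite F] [Nonempty n] (hf : IsPolyM f) :
    ∃ k : ℕ, ∀ A : Matrix n n F, f A = A.det ^ k := by
  obtain ⟨m, hm⟩ := diag_classify hmul h1 hf
  have hupd : ∀ (j : n) (t : F), f (diagonal (Function.update (1 : n → F) j t)) = t ^ m j := by
    intro j t
    rw [hm]
    refine (Finset.prod_eq_single j (fun k _ hk => by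
      rw [Function.update_of_ne hk]; exact one_pow _) (by simp)).trans
      (by rw [Function.update_self])
  obtain ⟨j₀⟩ := ‹Nonempty n›
  have hmeq : ∀ j, m j = m j₀ := by
    intro j
    have hswap : ∀ t : F, f (diagonal (Function.update (1 : n → F) j t)) =
        f (diagonal (Function.update (1 : n → F) j₀ t)) := by
      intro t
      rcases eq_or_ne j j₀ with rfl | hjj
      · rfl
      have : (diagonal (Function.update (1 : n → F) j t)).submatrix (Equiv.swap j j₀)
          (Equiv.swap j j₀) = diagonal (Function.update (1 : n → F) j₀ t) := by
        ext a b
        rw [submatrix_apply]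
        rcases eq_or_ne a b with rfl | hab
        · rw [diagonal_apply_eq, diagonal_apply_eq]
          rcases eq_or_ne a j₀ with rfl | haj0
          · rw [Equiv.swap_apply_right, Function.update_self, Function.update_self]
          · rcases eq_or_ne a j with rfl | haj
            · rw [Equiv.swap_apply_left, Function.update_of_ne (Ne.symm hjj),
                Function.update_of_ne hjj]
              rfl
            · rw [Equiv.swap_apply_of_ne_of_ne haj haj0, Function.update_of_ne haj,
                Function.update_of_ne haj0]
        · rw [diagonal_apply_ne _ (fun h => hab (Equiv.injective _ h)), diagonal_apply_ne _ hab]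
      rw [← this, f_submatrix hmul h1]
    have hpow : ∀ t : F, t ^ m j = t ^ m j₀ := by
      intro t
      rw [← hupd j, ← hupd j₀, hswap]
    have : (Polynomial.X : Polynomial F) ^ m j = Polynomial.X ^ m j₀ := by
      apply Polynomial.funext
      intro t
      simp [hpow t]
    simpa using congrArg Polynomial.natDegree this
  refine ⟨m j₀, fun A => ?_⟩
  obtain ⟨L, L', D, hA⟩ := Pivot.exists_list_transvec_mul_diagonal_mul_list_transvec A
  have hlist : ∀ L : List (TransvectionStruct n F), f (L.map TransvectionStruct.toMatrix).prod = 1 := by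
    intro L
    induction L with
    | nil => simpa using h1
    | cons t L ih =>
      rw [List.map_cons, List.prod_cons, hmul, ih, mul_one]
      cases t with
      | mk i j hij c => exact transvection_eq_one hmul h1 hf hij c
  have hdetlist : ∀ L : List (TransvectionStruct n F),
      (L.map TransvectionStruct.toMatrix).prod.det = 1 := by
    intro L
    induction L with
    | nil => simp
    | cons t L ih =>
      rw [List.map_cons, List.prod_cons, det_mul, ih, mul_one]
      cases t with
      | mk i j hij c => exact det_transvection_of_ne i j hij c
  have hdet : A.det = ∏ j, D j := by
    rw [hA, det_mul, det_mul, hdetlist, hdetlist, det_diagonal, one_mul, mul_one]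
  calc f A = f (L.map TransvectionStruct.toMatrix).prod * f (diagonal D) *
        f (L'.map TransvectionStruct.toMatrix).prod := by rw [hA, hmul, hmul]
    _ = f (diagonal D) := by rw [hlist, hlist, one_mul, mul_one]
    _ = ∏ j, D j ^ m j := hm D
    _ = ∏ j, D j ^ m j₀ := Finset.prod_congr rfl fun j _ => by rw [hmeq j]
    _ = (∏ j, D j) ^ m j₀ := by rw [Finset.prod_pow]
    _ = A.det ^ m j₀ := by rw [hdet]

end mult

end Stmt17Aux

section AlgebraAux

open MvPolynomial

variable {F R κ : Type*} [Field F] [Ring R] [Algebra F R] [Fintype κ] (b : Module.Basis κ F R)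

lemma polyFun_eq (p : MvPolynomial κ F) (r : R) :
    polyFun b p r = eval (fun i => b.repr r i) p := rfl

/-- The linear polynomial with `polyFun` equal to a given linear functional. -/
noncomputable def linPoly (ℓ : R →ₗ[F] F) : MvPolynomial κ F := ∑ i, C (ℓ (b i)) * X i

lemma polyFun_linPoly (ℓ : R →ₗ[F] F) (r : R) : polyFun b (linPoly b ℓ) r = ℓ r := by
  rw [polyFun_eq, linPoly, map_sum]
  conv_rhs => rw [← b.sum_repr r]
  rw [map_sum]
  refine Finset.sum_congr rfl fun i _ => ?_
  rw [map_mul, eval_C, eval_X, map_smul, smul_eq_mul, mul_comm]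

lemma polyFun_comp {σ : Type*} [Fintype σ] (q : MvPolynomial σ F) (ℓ : σ → R →ₗ[F] F) :
    ∃ p : MvPolynomial κ F, ∀ r, polyFun b p r = eval (fun s => ℓ s r) q := by
  refine ⟨aeval (fun s => linPoly b (ℓ s)) q, fun r => ?_⟩
  rw [polyFun_eq, Stmt17Aux.eval_aeval_mv]
  exact congrArg (fun g => eval g q) (funext fun s => polyFun_linPoly b (ℓ s) r)

lemma eval_charPolyOf (p : MvPolynomial κ F) (a : R) (t : F) :
    (charPolyOf b p a).eval t = polyFun b p (t • 1 - a) := by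
  rw [charPolyOf, Stmt17Aux.peval_aeval, polyFun_eq]
  refine congrArg (fun g => eval g p) (funext fun i => ?_)
  rw [Polynomial.eval_sub, Polynomial.eval_mul, Polynomial.eval_C, Polynomial.eval_C,
    Polynomial.eval_X, map_sub, Finsupp.sub_apply, map_smul, Finsupp.smul_apply,
    smul_eq_mul, mul_comm t]

lemma linfun_eq_sum_matrix {n : Type*} [Fintype n] [DecidableEq n]
    (L : Matrix n n F →ₗ[F] F) (A : Matrix n n F) :
    L A = ∑ s : n × n, A s.1 s.2 * L (Matrix.single s.1 s.2 1) := by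
  conv_lhs => rw [Matrix.matrix_eq_sum_single A]
  simp only [map_sum]
  rw [Fintype.sum_prod_type]
  refine Finset.sum_congr rfl fun a _ => Finset.sum_congr rfl fun c _ => ?_
  set s : n × n := (a, c) with hs
  rw [show Matrix.single s.1 s.2 (A s.1 s.2) =
    A s.1 s.2 • Matrix.single s.1 s.2 1 from by
      rw [Matrix.smul_single, smul_eq_mul, mul_one], map_smul, smul_eq_mul]

lemma isPolyM_affine {n : Type*} [Fintype n] [DecidableEq n]
    (p : MvPolynomial κ F) (r₀ : R) (Φ : Matrix n n F →ₗ[F] R) :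
    Stmt17Aux.IsPolyM (fun A => polyFun b p (r₀ + Φ A)) := by
  refine ⟨aeval (fun i => C (b.repr r₀ i) +
    ∑ s : n × n, C (b.repr (Φ (Matrix.single s.1 s.2 1)) i) * X s) p, fun A => ?_⟩
  show polyFun b p (r₀ + Φ A) = _
  rw [Stmt17Aux.eval_aeval_mv, polyFun_eq]
  refine congrArg (fun g => eval g p) (funext fun i => ?_)
  rw [map_add, eval_add, eval_C, map_sum, Finsupp.add_apply]
  congr 1
  have hl := linfun_eq_sum_matrix ((Finsupp.lapply i).comp (b.repr.toLinearMap.comp Φ)) A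
  simp only [LinearMap.comp_apply, LinearEquiv.coe_toLinearMap, Finsupp.lapply_apply] at hl
  rw [hl]
  refine Finset.sum_congr rfl fun s _ => ?_
  rw [eval_mul, eval_C, eval_X, mul_comm]

/-- The determinant as a multivariate polynomial in the entries. -/
noncomputable def detMv (n : Type*) [Fintype n] [DecidableEq n] : MvPolynomial (n × n) F :=
  (Matrix.of fun i j => X (i, j)).det

lemma eval_detMv {n : Type*} [Fintype n] [DecidableEq n] (A : Matrix n n F) :
    eval (fun s => A s.1 s.2) (detMv (F := F) n) = A.det := by
  rw [detMv, RingHom.map_det]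
  congr 1
  ext i j
  simp

lemma eval_matrix_charpoly {n : Type*} [Fintype n] [DecidableEq n] (M : Matrix n n F) (t : F) :
    M.charpoly.eval t = (t • (1 : Matrix n n F) - M).det := by
  rw [Matrix.charpoly, show Polynomial.eval t (Matrix.charmatrix M).det =
    ((Polynomial.evalRingHom t).mapMatrix (Matrix.charmatrix M)).det from
    RingHom.map_det (Polynomial.evalRingHom t) (Matrix.charmatrix M)]
  congr 1
  ext a b
  rw [RingHom.mapMatrix_apply]
  by_cases h : a = b
  · subst h
    simp [Matrix.charmatrix_apply_eq, Matrix.one_apply]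
  · simp [Matrix.charmatrix_apply_ne _ _ _ h, Matrix.one_apply, h]

lemma eval_end_charpoly {M : Type*} [AddCommGroup M] [Module F M] [FiniteDimensional F M]
    (g : Module.End F M) (t : F) :
    (LinearMap.charpoly g).eval t = LinearMap.det (t • (1 : Module.End F M) - g) := by
  let c := Module.finBasis F M
  rw [← LinearMap.charpoly_toMatrix g c, eval_matrix_charpoly,
    ← LinearMap.det_toMatrix c (t • (1 : Module.End F M) - g)]
  congr 1
  rw [map_sub, map_smul]
  congr 2
  rw [show (1 : Module.End F M) = LinearMap.id from rfl, LinearMap.toMatrix_id]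

lemma hom_pi_prod {ι : Type*} [Fintype ι] [DecidableEq ι] {G : ι → Type*} [∀ i, Monoid (G i)]
    {β : Type*} [CommMonoid β] (f : (∀ i, G i) → β)
    (hmul : ∀ x y, f (x * y) = f x * f y) (h1 : f 1 = 1) (r : ∀ i, G i) :
    f r = ∏ i, f (Function.update 1 i (r i)) := by
  have key : ∀ s : Finset ι, f (fun j => if j ∈ s then r j else 1) =
      ∏ i ∈ s, f (Function.update 1 i (r i)) := by
    intro s
    induction s using Finset.induction_on with
    | empty =>
      rw [Finset.prod_empty, show (fun j => if j ∈ (∅ : Finset ι) then r j else 1) =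
        (1 : ∀ i, G i) from funext fun j => by simp, h1]
    | @insert a s ha ih =>
      have hsp : (fun j => if j ∈ insert a s then r j else 1) =
          Function.update (1 : ∀ i, G i) a (r a) * (fun j => if j ∈ s then r j else 1) := by
        funext j
        rcases eq_or_ne j a with rfl | hj
        · simp [ha]
        · simp [hj, Function.update_of_ne hj]
      rw [hsp, hmul, ih, Finset.prod_insert ha]
  have h := key Finset.univ
  rw [show (fun j => if j ∈ Finset.univ then r j else 1) = r from funext fun j => by simp] at h
  exact h

end AlgebraAux

/-- For a finite-dimensional semisimple algebra `R = ⊕ᵢ End(Vᵢ)` over an algebraically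
closed field, the minimal CH-norm is the determinant of the minimal faithful representation
`⊕ᵢ Vᵢ`, i.e. `N(r) = ∏ᵢ det (r i)`. -/
theorem stmt17 {F ι κ : Type*} [Field F] [IsAlgClosed F] [Fintype ι] [Fintype κ]
    (V : ι → Type*) [∀ i, AddCommGroup (V i)] [∀ i, Module F (V i)]
    [∀ i, FiniteDimensional F (V i)] (hV : ∀ i, 0 < Module.finrank F (V i))
    (b : Module.Basis κ F (∀ i, Module.End F (V i))) :
    ∃ p : MvPolynomial κ F,
      (∀ r : ∀ i, Module.End F (V i), polyFun b p r = ∏ i, LinearMap.det (r i)) ∧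
      IsCHNorm b (∑ i, Module.finrank F (V i)) p ∧
      ∀ (k : ℕ) (N : MvPolynomial κ F), IsCHNorm b k N →
        ∃ g : MvPolynomial κ F,
          (∀ x y : ∀ i, Module.End F (V i),
            polyFun b g (x * y) = polyFun b g x * polyFun b g y) ∧
          ∀ r : ∀ i, Module.End F (V i),
            polyFun b N r = polyFun b g r * ∏ i, LinearMap.det (r i) := by
  classical
  -- a polynomial computing `det (r i)` for each `i`
  have hdet : ∀ i : ι, ∃ p : MvPolynomial κ F,
      ∀ r : ∀ i, Module.End F (V i), polyFun b p r = LinearMap.det (r i) := by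
    intro i
    set c := Module.finBasis F (V i) with hc
    let ℓ : (Fin (Module.finrank F (V i)) × Fin (Module.finrank F (V i))) →
        ((∀ i, Module.End F (V i)) →ₗ[F] F) := fun s =>
      { toFun := fun r => LinearMap.toMatrix c c (r i) s.1 s.2
        map_add' := fun x y => by
          show LinearMap.toMatrix c c ((x + y) i) s.1 s.2 = _
          rw [Pi.add_apply, map_add, Matrix.add_apply]
        map_smul' := fun t x => by
          show LinearMap.toMatrix c c ((t • x) i) s.1 s.2 = _
          rw [Pi.smul_apply, map_smul, Matrix.smul_apply, smul_eq_mul, RingHom.id_apply,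
            smul_eq_mul] }
    obtain ⟨p, hp⟩ := polyFun_comp b (detMv (F := F) _) ℓ
    refine ⟨p, fun r => ?_⟩
    rw [hp]
    rw [show (fun s => ℓ s r) = fun s => (LinearMap.toMatrix c c (r i)) s.1 s.2 from rfl,
      eval_detMv, LinearMap.det_toMatrix]
  choose detp hdetp using hdet
  -- `polyFun` of products of powers of the `detp i`
  have hpow : ∀ (m : ι → ℕ) (r : ∀ i, Module.End F (V i)),
      polyFun b (∏ i, detp i ^ m i) r = ∏ i, LinearMap.det (r i) ^ m i := by
    intro m r
    rw [polyFun_eq, map_prod]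
    exact Finset.prod_congr rfl fun i _ => by rw [map_pow, ← polyFun_eq, hdetp]
  have hp1 : ∀ r : ∀ i, Module.End F (V i),
      polyFun b (∏ i, detp i) r = ∏ i, LinearMap.det (r i) := by
    intro r
    rw [polyFun_eq, map_prod]
    exact Finset.prod_congr rfl fun i _ => by rw [← polyFun_eq, hdetp]
  refine ⟨∏ i, detp i, hp1, ⟨?_, ?_, ?_⟩, ?_⟩
  · -- homogeneity of degree `∑ finrank`
    intro α r
    rw [hp1, hp1]
    calc (∏ i, LinearMap.det ((α • r) i))
        = ∏ i, α ^ Module.finrank F (V i) * LinearMap.det (r i) := by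
          refine Finset.prod_congr rfl fun i _ => ?_
          rw [show (α • r) i = α • r i from rfl, LinearMap.det_smul]
      _ = α ^ (∑ i, Module.finrank F (V i)) * ∏ i, LinearMap.det (r i) := by
          rw [Finset.prod_mul_distrib, Finset.prod_pow_eq_pow_sum]
  · -- multiplicativity
    intro x y
    rw [hp1, hp1, hp1, ← Finset.prod_mul_distrib]
    exact Finset.prod_congr rfl fun i _ => by rw [Pi.mul_apply, map_mul]
  · -- Cayley–Hamilton
    intro a
    have hcp : charPolyOf b (∏ i, detp i) a = ∏ i, LinearMap.charpoly (a i) := by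
      apply Polynomial.funext
      intro t
      rw [eval_charPolyOf, hp1, Polynomial.eval_prod]
      refine Finset.prod_congr rfl fun i _ => ?_
      rw [eval_end_charpoly]
      rfl
    rw [hcp]
    funext j
    rw [show (Polynomial.aeval a (∏ i, LinearMap.charpoly (a i))) j =
      Polynomial.aeval (a j) (∏ i, LinearMap.charpoly (a i)) from
      (Polynomial.aeval_algHom_apply (Pi.evalAlgHom F (fun i => Module.End F (V i)) j) a _).symm,
      ]
    obtain ⟨u, hu⟩ := Finset.dvd_prod_of_mem (fun i => LinearMap.charpoly (a i))
      (Finset.mem_univ j)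
    rw [hu, map_mul, LinearMap.aeval_self_charpoly, zero_mul]
    rfl
  · -- minimality
    intro k N hN
    by_cases hN1 : polyFun b N 1 = 0
    · refine ⟨0, fun x y => by simp [polyFun_eq], ?_⟩
      intro r
      have h0 : polyFun b N r = 0 := by
        have := hN.mult r 1
        rw [mul_one, hN1, mul_zero] at this
        exact this
      rw [h0, polyFun_eq, map_zero, zero_mul]
    · have hone : polyFun b N 1 = 1 := by
        have h := hN.mult 1 1
        rw [mul_one] at h
        exact (mul_left_cancel₀ hN1 (by rw [mul_one, ← h])).symm
      -- on each block, `N` is a power of det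
      have hblock : ∀ i : ι, ∃ ki : ℕ, ∀ s : Module.End F (V i),
          polyFun b N (Function.update 1 i s) = LinearMap.det s ^ ki := by
        intro i
        haveI : Nonempty (Fin (Module.finrank F (V i))) := ⟨⟨0, hV i⟩⟩
        set c := Module.finBasis F (V i) with hc
        set Φ : Matrix (Fin (Module.finrank F (V i))) (Fin (Module.finrank F (V i))) F →ₗ[F]
            (∀ i, Module.End F (V i)) :=
          (LinearMap.single F (fun i => Module.End F (V i)) i).comp
            (Matrix.toLin c c).toLinearMap with hΦ
        have hupd : ∀ A, Function.update (1 : ∀ i, Module.End F (V i)) i 0 + Φ A =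
            Function.update (1 : ∀ i, Module.End F (V i)) i (Matrix.toLin c c A) := by
          intro A
          funext j
          rcases eq_or_ne j i with rfl | hj
          · rw [Pi.add_apply, Function.update_self, Function.update_self, zero_add]
            show (Pi.single j (Matrix.toLin c c A) : ∀ i, Module.End F (V i)) j = _
            rw [Pi.single_eq_same]
          · rw [Pi.add_apply, Function.update_of_ne hj, Function.update_of_ne hj]
            show _ + (Pi.single i (Matrix.toLin c c A) : ∀ i, Module.End F (V i)) j = _
            rw [Pi.single_eq_of_ne hj, add_zero]
        have hupdmul : ∀ x y : Module.End F (V i),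
            Function.update (1 : ∀ i, Module.End F (V i)) i (x * y) =
              Function.update (1 : ∀ i, Module.End F (V i)) i x *
                Function.update (1 : ∀ i, Module.End F (V i)) i y := by
          intro x y
          have h := Function.update_mul (1 : ∀ i, Module.End F (V i)) 1 i x y
          rwa [mul_one] at h
        have hfpoly : Stmt17Aux.IsPolyM (fun A =>
            polyFun b N (Function.update (1 : ∀ i, Module.End F (V i)) i
              (Matrix.toLin c c A))) := by
          obtain ⟨q, hq⟩ := isPolyM_affine b N (Function.update 1 i 0) Φ
          refine ⟨q, fun A => ?_⟩
          show polyFun b N (Function.update (1 : ∀ i, Module.End F (V i)) i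
            (Matrix.toLin c c A)) = _
          rw [← hupd A]
          exact hq A
        have hfmul : ∀ A B : Matrix _ _ F,
            polyFun b N (Function.update (1 : ∀ i, Module.End F (V i)) i
              (Matrix.toLin c c (A * B))) =
            polyFun b N (Function.update (1 : ∀ i, Module.End F (V i)) i (Matrix.toLin c c A)) *
            polyFun b N (Function.update (1 : ∀ i, Module.End F (V i)) i (Matrix.toLin c c B)) := by
          intro A B
          rw [show Matrix.toLin c c (A * B) = Matrix.toLin c c A * Matrix.toLin c c B from by
            rw [Matrix.toLin_mul (v₂ := c), Module.End.mul_eq_comp], hupdmul, hN.mult]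
        have hf1 : polyFun b N (Function.update (1 : ∀ i, Module.End F (V i)) i
            (Matrix.toLin c c 1)) = 1 := by
          rw [show Matrix.toLin c c (1 : Matrix _ _ F) = 1 from by rw [Matrix.toLin_one]; rfl,
            Function.update_one, hone]
        obtain ⟨ki, hki⟩ := Stmt17Aux.matrix_classify hfmul hf1 hfpoly
        refine ⟨ki, fun s => ?_⟩
        have h := hki (LinearMap.toMatrix c c s)
        rw [Matrix.toLin_toMatrix] at h
        rw [h, LinearMap.det_toMatrix]
      choose kk hkk using hblock
      -- global product formula
      have hNf : ∀ r : ∀ i, Module.End F (V i),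
          polyFun b N r = ∏ i, LinearMap.det (r i) ^ kk i := by
        intro r
        rw [hom_pi_prod (polyFun b N) hN.mult hone r]
        exact Finset.prod_congr rfl fun i _ => hkk i (r i)
      -- each exponent is positive, by the Cayley–Hamilton property
      have hk1 : ∀ j, kk j ≠ 0 := by
        intro j hkj
        obtain ⟨μ⟩ : Nonempty (ι ↪ F) :=
          ⟨(Fintype.equivFin ι).toEmbedding.trans
            (Fin.valEmbedding.trans (Infinite.natEmbedding F))⟩
        set a : ∀ i, Module.End F (V i) := fun i => (μ i : F) • 1 with ha
        have hch := congrFun (hN.ch a) j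
        rw [show (Polynomial.aeval a (charPolyOf b N a)) j =
          Polynomial.aeval (a j) (charPolyOf b N a) from
          (Polynomial.aeval_algHom_apply
            (Pi.evalAlgHom F (fun i => Module.End F (V i)) j) a _).symm] at hch
        rw [show a j = algebraMap F (Module.End F (V j)) (μ j) from by
          rw [Algebra.algebraMap_eq_smul_one]] at hch
        rw [Polynomial.aeval_algebraMap_apply] at hch
        have heval : (Polynomial.aeval (μ j) (charPolyOf b N a) : F) =
            (charPolyOf b N a).eval (μ j) :=
          congrFun (Polynomial.coe_aeval_eq_eval (μ j)) _
        rw [heval] at hch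
        have hval : (charPolyOf b N a).eval (μ j) =
            ∏ i, (((μ j : F) - μ i) ^ Module.finrank F (V i)) ^ kk i := by
          rw [eval_charPolyOf, hNf]
          refine Finset.prod_congr rfl fun i _ => ?_
          congr 1
          rw [show (((μ j : F) • (1 : ∀ i, Module.End F (V i))) - a) i =
            ((μ j : F) - μ i) • (1 : Module.End F (V i)) from by
              rw [Pi.sub_apply, Pi.smul_apply, Pi.one_apply, ha, sub_smul],
            LinearMap.det_smul, show (1 : Module.End F (V i)) = LinearMap.id from rfl,
            LinearMap.det_id, mul_one]
        have hne : (charPolyOf b N a).eval (μ j) ≠ 0 := by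
          rw [hval]
          apply Finset.prod_ne_zero_iff.mpr
          intro i _
          rcases eq_or_ne i j with rfl | hij
          · rw [hkj, pow_zero]
            exact one_ne_zero
          · exact pow_ne_zero _ (pow_ne_zero _
              (sub_ne_zero_of_ne fun h => hij (μ.injective h.symm)))
        haveI : Nontrivial (V j) := Module.nontrivial_of_finrank_pos (hV j)
        obtain ⟨v, hv⟩ := exists_ne (0 : V j)
        apply hne
        have hsmul : ((charPolyOf b N a).eval (μ j)) • v = 0 := by
          have h := congrArg (fun g : Module.End F (V j) => g v) hch
          simpa [Algebra.algebraMap_eq_smul_one] using h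
        rcases smul_eq_zero.mp hsmul with h | h
        · exact h
        · exact absurd h hv
      refine ⟨∏ i, detp i ^ (kk i - 1), ?_, ?_⟩
      · intro x y
        rw [hpow, hpow, hpow, ← Finset.prod_mul_distrib]
        exact Finset.prod_congr rfl fun i _ => by rw [Pi.mul_apply, map_mul, mul_pow]
      · intro r
        rw [hNf r, hpow, ← Finset.prod_mul_distrib]
        refine Finset.prod_congr rfl fun i _ => ?_
        rw [← pow_succ, Nat.sub_add_cancel (Nat.one_le_iff_ne_zero.mpr (hk1 i))]
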